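/- Let Z be a bounded (or integrable) real random variable on a probability space and α ∈ (0,1]. Then sup over measurable weights w with 0 ≤ w ≤ 1/α and E[w] = 1 of E[w·Z] equals min over τ ∈ ℝ of { τ + (1/α)·E[(Z − τ)₊] }, i.e., the CVaR at level 1−α of Z. -/

import Mathlib

open MeasureTheory

section Aux
variable {Ω : Type*} [MeasurableSpace Ω] {P : Measure Ω} [IsProbabilityMeasure P]

lemma int_bdd (f : Ω → ℝ) (hf : Measurable f) (C : ℝ) (h : ∀ ω, |f ω| ≤ C) :
    Integrable f P :=
  (integrable_const C).mono' hf.aestronglyMeasurable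
    (Filter.Eventually.of_forall (by simpa [Real.norm_eq_abs] using h))

end Aux

theorem cvar_dual
    {Ω : Type*} [MeasurableSpace Ω] (P : Measure Ω) [IsProbabilityMeasure P]
    (Z : Ω → ℝ) (hZm : Measurable Z) (B : ℝ) (hZb : ∀ ω, |Z ω| ≤ B)
    (α : ℝ) (hα : α ∈ Set.Ioc (0:ℝ) 1) :
    IsLeast
      {v : ℝ | ∃ τ : ℝ, v = τ + (1 / α) * ∫ ω, max (Z ω - τ) 0 ∂P}
      (sSup {r : ℝ | ∃ w : Ω → ℝ, Measurable w ∧ (∀ ω, 0 ≤ w ω ∧ w ω ≤ 1 / α) ∧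
        (∫ ω, w ω ∂P) = 1 ∧ r = ∫ ω, w ω * Z ω ∂P}) := by
  obtain ⟨hα0, hα1⟩ := hα
  have hne : Nonempty Ω := MeasureTheory.Measure.nonempty_of_neZero P
  obtain ⟨ω0⟩ := hne
  have hB0 : 0 ≤ B := le_trans (abs_nonneg _) (hZb ω0)
  have hαinv : (0:ℝ) < 1/α := by positivity
  have hZint : Integrable Z P := int_bdd Z hZm B hZb
  set R : Set ℝ := {r : ℝ | ∃ w : Ω → ℝ, Measurable w ∧ (∀ ω, 0 ≤ w ω ∧ w ω ≤ 1 / α) ∧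
        (∫ ω, w ω ∂P) = 1 ∧ r = ∫ ω, w ω * Z ω ∂P} with hR
  -- nonemptiness of R
  have hRne : R.Nonempty := by
    refine ⟨∫ ω, (1:ℝ) * Z ω ∂P, (fun _ => 1), measurable_const, fun ω => ⟨zero_le_one, ?_⟩, by
      simp, rfl⟩
    rw [le_div_iff₀ hα0]; simpa using hα1
  -- key upper bound
  have key : ∀ r ∈ R, ∀ τ : ℝ, r ≤ τ + (1 / α) * ∫ ω, max (Z ω - τ) 0 ∂P := by
    rintro r ⟨w, hwm, hwb, hw1, rfl⟩ τ
    have hmaxint : Integrable (fun ω => max (Z ω - τ) 0) P := by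
      refine int_bdd _ ((hZm.sub measurable_const).max measurable_const) (B + |τ|) fun ω => ?_
      rw [abs_of_nonneg (le_max_right _ _)]
      refine max_le ?_ (by positivity)
      have := (abs_le.mp (hZb ω)).2
      have := neg_abs_le τ
      linarith
    have hwint : Integrable w P := int_bdd _ hwm (1/α) fun ω => by
      rw [abs_le]; exact ⟨by linarith [(hwb ω).1, hαinv.le], (hwb ω).2⟩
    have hwZint : Integrable (fun ω => w ω * Z ω) P := by
      refine int_bdd _ (hwm.mul hZm) ((1/α) * B) fun ω => ?_
      rw [abs_mul]
      refine mul_le_mul ?_ (hZb ω) (abs_nonneg _) hαinv.le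
      rw [abs_of_nonneg (hwb ω).1]; exact (hwb ω).2
    have hptwise : ∀ ω, w ω * Z ω ≤ τ * w ω + (1/α) * max (Z ω - τ) 0 := by
      intro ω
      obtain ⟨h0, h1⟩ := hwb ω
      have e1 : w ω * (Z ω - τ) ≤ w ω * max (Z ω - τ) 0 :=
        mul_le_mul_of_nonneg_left (le_max_left _ _) h0
      have e2 : w ω * max (Z ω - τ) 0 ≤ (1/α) * max (Z ω - τ) 0 :=
        mul_le_mul_of_nonneg_right h1 (le_max_right _ _)
      nlinarith
    have hint2 : Integrable (fun ω => τ * w ω + (1/α) * max (Z ω - τ) 0) P :=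
      (hwint.const_mul τ).add (hmaxint.const_mul _)
    calc ∫ ω, w ω * Z ω ∂P ≤ ∫ ω, (τ * w ω + (1/α) * max (Z ω - τ) 0) ∂P :=
          integral_mono hwZint hint2 hptwise
      _ = τ * ∫ ω, w ω ∂P + (1/α) * ∫ ω, max (Z ω - τ) 0 ∂P := by
          rw [integral_add (hwint.const_mul τ) (hmaxint.const_mul _),
            integral_const_mul, integral_const_mul]
      _ = τ + (1/α) * ∫ ω, max (Z ω - τ) 0 ∂P := by rw [hw1, mul_one]
  have hRbdd : BddAbove R := ⟨0 + (1/α) * ∫ ω, max (Z ω - 0) 0 ∂P, fun r hr => key r hr 0⟩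
  -- construction of τ*
  set S : Set ℝ := {τ : ℝ | -B ≤ τ ∧ P {ω | τ < Z ω} ≤ ENNReal.ofReal α} with hS
  have hBS : B ∈ S := by
    refine ⟨by linarith, ?_⟩
    have hemp : {ω | B < Z ω} = ∅ := by
      ext ω; simp only [Set.mem_setOf_eq, Set.mem_empty_iff_false, iff_false, not_lt]
      exact (abs_le.mp (hZb ω)).2
    rw [hemp, measure_empty]; exact zero_le
  have hSbdd : BddBelow S := ⟨-B, fun τ hτ => hτ.1⟩
  set τs : ℝ := sInf S with hτs
  have hτsB : -B ≤ τs := le_csInf ⟨B, hBS⟩ fun τ hτ => hτ.1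
  have hτsB' : τs ≤ B := csInf_le hSbdd hBS
  set A : Set Ω := {ω | τs < Z ω} with hA
  set E : Set Ω := {ω | Z ω = τs} with hE
  have hAm : MeasurableSet A := measurableSet_lt measurable_const hZm
  have hEm : MeasurableSet E := hZm (measurableSet_singleton τs)
  -- P A ≤ ofReal α
  have hPA : P A ≤ ENNReal.ofReal α := by
    have hU : A = ⋃ n : ℕ, {ω | τs + 1/(n+1) < Z ω} := by
      ext ω
      simp only [hA, Set.mem_setOf_eq, Set.mem_iUnion]
      constructor
      · intro h
        obtain ⟨n, hn⟩ := exists_nat_one_div_lt (sub_pos.mpr h)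
        exact ⟨n, by push_cast at hn ⊢; linarith⟩
      · rintro ⟨n, hn⟩
        have h1 : (0:ℝ) < 1/((n:ℝ)+1) := by positivity
        linarith
    have hmono : Monotone (fun n : ℕ => {ω | τs + 1/((n:ℝ)+1) < Z ω}) := by
      intro m n hmn ω hω
      simp only [Set.mem_setOf_eq] at hω ⊢
      have h1 : 1/((n:ℝ)+1) ≤ 1/((m:ℝ)+1) := by
        apply one_div_le_one_div_of_le (by positivity)
        exact_mod_cast add_le_add_left (Nat.cast_le.mpr hmn) 1
      linarith
    rw [hU, Directed.measure_iUnion hmono.directed_le]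
    refine iSup_le fun n => ?_
    have hlt : τs < τs + 1/((n:ℝ)+1) := by
      have h1 : (0:ℝ) < 1/((n:ℝ)+1) := by positivity
      linarith
    obtain ⟨s, hsS, hs⟩ := (csInf_lt_iff hSbdd ⟨B, hBS⟩).mp hlt
    refine le_trans (measure_mono ?_) hsS.2
    intro ω hω
    simp only [Set.mem_setOf_eq] at hω ⊢
    linarith
  -- ofReal α ≤ P A + P E
  have hdisj : Disjoint A E := by
    rw [Set.disjoint_left]
    intro ω hωA hωE
    simp only [hA, Set.mem_setOf_eq] at hωA
    simp only [hE, Set.mem_setOf_eq] at hωE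
    rw [hωE] at hωA
    exact lt_irrefl _ hωA
  have hPAE : ENNReal.ofReal α ≤ P A + P E := by
    have hAE : A ∪ E = {ω | τs ≤ Z ω} := by
      ext ω
      simp only [hA, hE, Set.mem_union, Set.mem_setOf_eq]
      constructor
      · rintro (h | h)
        · exact le_of_lt h
        · exact le_of_eq h.symm
      · intro h
        rcases lt_or_eq_of_le h with h' | h'
        · exact Or.inl h'
        · exact Or.inr h'.symm
    rw [← measure_union hdisj hEm, hAE]
    rcases eq_or_lt_of_le hτsB with heq | hlt
    · have huniv : {ω | τs ≤ Z ω} = Set.univ := by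
        ext ω; simp only [Set.mem_setOf_eq, Set.mem_univ, iff_true]
        have := (abs_le.mp (hZb ω)).1
        rw [← heq]; linarith
      rw [huniv, measure_univ]
      exact ENNReal.ofReal_le_one.mpr hα1
    · have hI : {ω | τs ≤ Z ω} = ⋂ n : ℕ, {ω | τs - 1/((n:ℝ)+1) < Z ω} := by
        ext ω
        simp only [Set.mem_setOf_eq, Set.mem_iInter]
        constructor
        · intro h n
          have h1 : (0:ℝ) < 1/((n:ℝ)+1) := by positivity
          linarith
        · intro h
          by_contra hc
          push_neg at hc
          obtain ⟨n, hn⟩ := exists_nat_one_div_lt (sub_pos.mpr hc)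
          have := h n
          push_cast at hn
          linarith
      have hanti : Antitone (fun n : ℕ => {ω | τs - 1/((n:ℝ)+1) < Z ω}) := by
        intro m n hmn ω hω
        simp only [Set.mem_setOf_eq] at hω ⊢
        have h1 : 1/((n:ℝ)+1) ≤ 1/((m:ℝ)+1) := by
          apply one_div_le_one_div_of_le (by positivity)
          exact_mod_cast add_le_add_left (Nat.cast_le.mpr hmn) 1
        linarith
      rw [hI, Directed.measure_iInter
        (fun n => (measurableSet_lt measurable_const hZm).nullMeasurableSet)
        hanti.directed_ge ⟨0, measure_ne_top P _⟩]
      refine le_iInf fun n => ?_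
      set t : ℝ := τs - 1/((n:ℝ)+1) with ht
      have htlt : t < τs := by
        have h1 : (0:ℝ) < 1/((n:ℝ)+1) := by positivity
        simp only [ht]; linarith
      rcases le_or_gt (-B) t with hb | hb
      · have htS : t ∉ S := fun hmem => absurd (csInf_le hSbdd hmem) (not_le.mpr htlt)
        have hnot : ¬ P {ω | t < Z ω} ≤ ENNReal.ofReal α := fun hle => htS ⟨hb, hle⟩
        exact (not_le.mp hnot).le
      · have huniv : {ω | t < Z ω} = Set.univ := by
          ext ω; simp only [Set.mem_setOf_eq, Set.mem_univ, iff_true]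
          have := (abs_le.mp (hZb ω)).1
          linarith
        rw [huniv, measure_univ]
        exact ENNReal.ofReal_le_one.mpr hα1
  -- real versions
  set p : ℝ := (P A).toReal with hp
  set q : ℝ := (P E).toReal with hq
  have hPAfin : P A ≠ ⊤ := measure_ne_top P _
  have hPEfin : P E ≠ ⊤ := measure_ne_top P _
  have hp0 : 0 ≤ p := ENNReal.toReal_nonneg
  have hq0 : 0 ≤ q := ENNReal.toReal_nonneg
  have hpα : p ≤ α := by
    have h2 := ENNReal.toReal_mono (by simp) hPA
    rwa [ENNReal.toReal_ofReal hα0.le] at h2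
  have hαpq : α ≤ p + q := by
    have h2 := ENNReal.toReal_mono (by
      simp [ENNReal.add_ne_top, hPAfin, hPEfin]) hPAE
    rwa [ENNReal.toReal_ofReal hα0.le, ENNReal.toReal_add hPAfin hPEfin] at h2
  -- the optimal weight
  set c : ℝ := if q = 0 then 0 else (α - p)/(α*q) with hc
  have hc0 : 0 ≤ c := by
    rw [hc]; split_ifs with h
    · exact le_refl 0
    · have hq' : 0 < q := lt_of_le_of_ne hq0 (Ne.symm h)
      exact div_nonneg (sub_nonneg.mpr hpα) (by positivity)
  have hcα : c ≤ 1/α := by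
    rw [hc]; split_ifs with h
    · exact hαinv.le
    · have hq' : 0 < q := lt_of_le_of_ne hq0 (Ne.symm h)
      rw [div_le_div_iff₀ (by positivity) hα0]
      have : α - p ≤ q := by linarith
      nlinarith
  have hqc : q * c = (α - p)/α := by
    rw [hc]; split_ifs with h
    · rw [h] at hαpq ⊢
      have : p = α := le_antisymm hpα (by linarith)
      rw [this]; simp
    · have hq' : 0 < q := lt_of_le_of_ne hq0 (Ne.symm h)
      field_simp
  -- the optimal weight function
  set ws : Ω → ℝ := fun ω => A.indicator (fun _ => 1/α) ω + E.indicator (fun _ => c) ω with hws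
  have hwsm : Measurable ws :=
    (measurable_const.indicator hAm).add (measurable_const.indicator hEm)
  have hwsb : ∀ ω, 0 ≤ ws ω ∧ ws ω ≤ 1/α := by
    intro ω
    by_cases hωA : ω ∈ A
    · have hωE : ω ∉ E := Set.disjoint_left.mp hdisj hωA
      simp only [hws, Set.indicator_of_mem hωA, Set.indicator_of_notMem hωE, add_zero]
      exact ⟨hαinv.le, le_refl _⟩
    · by_cases hωE : ω ∈ E
      · simp only [hws, Set.indicator_of_notMem hωA, Set.indicator_of_mem hωE, zero_add]
        exact ⟨hc0, hcα⟩
      · simp only [hws, Set.indicator_of_notMem hωA, Set.indicator_of_notMem hωE, add_zero]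
        exact ⟨le_refl _, hαinv.le⟩
  have hws1 : ∫ ω, ws ω ∂P = 1 := by
    rw [hws]
    rw [integral_add ((integrable_const _).indicator hAm) ((integrable_const _).indicator hEm),
      integral_indicator_const _ hAm, integral_indicator_const _ hEm]
    simp only [smul_eq_mul, measureReal_def, ← hp, ← hq]
    rw [hqc]
    field_simp
    ring
  set I : ℝ := ∫ ω in A, Z ω ∂P with hI
  have hwsZ : ∫ ω, ws ω * Z ω ∂P = (1/α) * I + q * (c * τs) := by
    have heq : (fun ω => ws ω * Z ω)
        = fun ω => A.indicator (fun ω' => (1/α) * Z ω') ω + E.indicator (fun _ => c * τs) ω := by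
      funext ω
      by_cases hωA : ω ∈ A
      · have hωE : ω ∉ E := Set.disjoint_left.mp hdisj hωA
        simp only [hws, Set.indicator_of_mem hωA, Set.indicator_of_notMem hωE, add_zero]
      · by_cases hωE : ω ∈ E
        · have hZω : Z ω = τs := hωE
          simp only [hws, Set.indicator_of_notMem hωA, Set.indicator_of_mem hωE, zero_add, hZω]
        · simp only [hws, Set.indicator_of_notMem hωA, Set.indicator_of_notMem hωE, add_zero,
            zero_mul]
    rw [heq, integral_add ((hZint.const_mul (1/α)).indicator hAm)
      ((integrable_const _).indicator hEm),
      integral_indicator hAm, integral_indicator_const _ hEm, integral_const_mul]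
    simp only [smul_eq_mul, measureReal_def, ← hq, ← hI]
  have hmaxτs : ∫ ω, max (Z ω - τs) 0 ∂P = I - τs * p := by
    have heq : (fun ω => max (Z ω - τs) 0) = fun ω => A.indicator (fun ω' => Z ω' - τs) ω := by
      funext ω
      by_cases hωA : ω ∈ A
      · rw [Set.indicator_of_mem hωA]
        exact max_eq_left (sub_nonneg.mpr (le_of_lt hωA))
      · rw [Set.indicator_of_notMem hωA]
        have : Z ω ≤ τs := not_lt.mp hωA
        exact max_eq_right (sub_nonpos.mpr this)
    rw [heq, integral_indicator hAm,
      integral_sub hZint.integrableOn (integrable_const τs).integrableOn,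
      setIntegral_const]
    simp only [smul_eq_mul, measureReal_def, ← hp, ← hI]
    ring
  -- membership of the minimum value in R
  have hmemR : τs + (1/α) * ∫ ω, max (Z ω - τs) 0 ∂P ∈ R := by
    refine ⟨ws, hwsm, hwsb, hws1, ?_⟩
    rw [hwsZ, hmaxτs]
    have hq' : q * (c * τs) = (α - p)/α * τs := by rw [← mul_assoc, hqc]
    rw [hq']
    field_simp
    ring
  constructor
  · refine ⟨τs, ?_⟩
    exact le_antisymm (csSup_le hRne fun r hr => key r hr τs) (le_csSup hRbdd hmemR)
  · rintro v ⟨τ, rfl⟩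
    exact csSup_le hRne fun r hr => key r hr τ
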